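/- Let K ⊂ [0,∞) be a compact set, well-ordered by the reverse usual order with order type ω^ω + 1, and satisfying ρ·K^(μ) = K for some real ρ > 1 and natural number μ ≥ 1, where K^(μ) denotes the μ-th derived set (set of accumulation points iterated μ times). Then the intersection of all derived sets ⋂_{n≥0} K^(n) equals {0}; in particular the element of K in position ω^ω (its minimum) is 0. -/

import Mathlib

open Ordinal Filter Topology Set

/-- The `n`-th derived set of `A ⊆ ℝ`. -/
noncomputable def iterDeriv (A : Set ℝ) (n : ℕ) : Set ℝ := (derivedSet (X := ℝ))^[n] A

/-- The ordinal `ω ^ ω`. -/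
noncomputable def wOmega : Ordinal.{0} := Ordinal.omega0 ^ Ordinal.omega0

structure OrdEnum (K : Set ℝ) where
  e : Ordinal.{0} → ℝ
  mem : ∀ α ≤ wOmega, e α ∈ K
  surj : ∀ x ∈ K, ∃ α ≤ wOmega, e α = x
  anti : ∀ ⦃α β : Ordinal.{0}⦄, α ≤ wOmega → β ≤ wOmega → (α < β ↔ e β < e α)

structure SubEnum (S : Set ℝ) where
  e : Ordinal.{0} → ℝ
  mem : ∀ α < wOmega, e α ∈ S
  surj : ∀ x ∈ S, ∃ α < wOmega, e α = x
  anti : ∀ ⦃α β : Ordinal.{0}⦄, α < wOmega → β < wOmega → (α < β ↔ e β < e α)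

def SelfSimilar (K : Set ℝ) (ρ : ℝ) (μ : ℕ) : Prop :=
  IsCompact K ∧ K ⊆ Set.Ici 0 ∧ 1 < ρ ∧ 1 ≤ μ ∧
    (fun x => ρ * x) '' iterDeriv K μ = K ∧ Nonempty (OrdEnum K)

lemma derivedSet_image_mul (c : ℝ) (hc : c ≠ 0) (A : Set ℝ) :
    derivedSet ((fun x => c * x) '' A) = (fun x => c * x) '' derivedSet A := by
  apply subset_antisymm
  · intro x hx
    have h1 : (fun x => c⁻¹ * x) '' derivedSet ((fun x => c * x) '' A)
        ⊆ derivedSet ((fun x => c⁻¹ * x) '' ((fun x => c * x) '' A)) :=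
      Continuous.image_derivedSet (by continuity) (fun a b hab => by
        simpa [hc] using hab)
    have h2 : (fun x : ℝ => c⁻¹ * x) '' ((fun x => c * x) '' A) = A := by
      rw [← Set.image_comp]
      simp [Function.comp_def, ← mul_assoc, inv_mul_cancel₀ hc]
    refine ⟨c⁻¹ * x, ?_, by field_simp⟩
    have := h1 ⟨x, hx, rfl⟩
    rwa [h2] at this
  · exact Continuous.image_derivedSet (by continuity) (fun a b hab => by simpa [hc] using hab)

lemma iterDeriv_image_mul (c : ℝ) (hc : c ≠ 0) (A : Set ℝ) (n : ℕ) :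
    iterDeriv ((fun x => c * x) '' A) n = (fun x => c * x) '' iterDeriv A n := by
  induction n with
  | zero => rfl
  | succ n ih =>
    simp only [iterDeriv, Function.iterate_succ_apply'] at *
    rw [ih, derivedSet_image_mul c hc]

theorem iInter_iterDeriv_eq_singleton_zero (K : Set ℝ) (ρ : ℝ) (μ : ℕ)
    (h : SelfSimilar K ρ μ) (E : OrdEnum K) :
    (⋂ n : ℕ, iterDeriv K n) = {0} ∧ E.e wOmega = 0 := by
  obtain ⟨hK, hK0, hρ, hμ, hself, -⟩ := h
  have hρ0 : ρ ≠ 0 := by positivity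
  have hKcl : IsClosed K := hK.isClosed
  have hKne : K.Nonempty := ⟨E.e 0, E.mem 0 zero_le⟩
  -- iterDeriv K μ = ρ⁻¹ • K
  have hdμ : iterDeriv K μ = (fun x => ρ⁻¹ * x) '' K := by
    have h2 := congrArg (Set.image (fun x : ℝ => ρ⁻¹ * x)) hself
    rw [← Set.image_comp] at h2
    have h3 : ((fun x : ℝ => ρ⁻¹ * x) ∘ fun x => ρ * x) = id := by
      funext x; simp [Function.comp, ← mul_assoc, inv_mul_cancel₀ hρ0]
    rw [h3, Set.image_id] at h2
    exact h2
  -- closedness of each iterDeriv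
  have hcl : ∀ n, IsClosed (iterDeriv K n) := by
    intro n
    cases n with
    | zero => exact hKcl
    | succ n =>
      rw [iterDeriv, Function.iterate_succ_apply']
      exact isClosed_derivedSet _
  -- antitone
  have hstep : ∀ n, iterDeriv K (n + 1) ⊆ iterDeriv K n := by
    intro n
    rw [iterDeriv, Function.iterate_succ_apply']
    exact (isClosed_iff_derivedSet_subset _).mp (hcl n)
  have hanti : ∀ {m n : ℕ}, m ≤ n → iterDeriv K n ⊆ iterDeriv K m := by
    intro m n hmn
    induction hmn with
    | refl => exact subset_rfl
    | step h ih => exact fun x hx => (ih (hstep _ hx))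
  have hsubK : ∀ n, iterDeriv K n ⊆ K := fun n => hanti (Nat.zero_le n)
  -- iterDeriv K (k*μ) = ρ⁻¹^k • K
  have hkey : ∀ k : ℕ, iterDeriv K (k * μ) = (fun x => (ρ⁻¹) ^ k * x) '' K := by
    intro k
    induction k with
    | zero => simp [iterDeriv]
    | succ k ih =>
      have : (k + 1) * μ = k * μ + μ := by ring
      rw [this, iterDeriv, Function.iterate_add_apply]
      have : (derivedSet (X := ℝ))^[μ] K = iterDeriv K μ := rfl
      rw [this, hdμ, ← iterDeriv]
      rw [iterDeriv_image_mul ρ⁻¹ (by positivity) K (k * μ), ih, ← Set.image_comp]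
      funext x
      simp [Function.comp, pow_succ, mul_comm, mul_assoc, mul_left_comm]
  -- each iterDeriv is nonempty
  have hne : ∀ n, (iterDeriv K n).Nonempty := by
    intro n
    have h1 : n ≤ n * μ := Nat.le_mul_of_pos_right n hμ
    have h2 : (iterDeriv K (n * μ)).Nonempty := by
      rw [hkey n]
      exact hKne.image _
    exact h2.mono (hanti h1)
  -- the intersection is nonempty
  have hInterNe : (⋂ n : ℕ, iterDeriv K n).Nonempty :=
    IsCompact.nonempty_iInter_of_sequence_nonempty_isCompact_isClosed _ hstep hne
      (by simpa [iterDeriv] using hK) hcl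
  -- K is bounded above
  obtain ⟨M, hM⟩ := hK.bddAbove
  -- intersection ⊆ {0}
  have hsub : (⋂ n : ℕ, iterDeriv K n) ⊆ {0} := by
    intro x hx
    simp only [Set.mem_iInter] at hx
    have hx0 : 0 ≤ x := hK0 (hsubK 0 (hx 0))
    have hub : ∀ k : ℕ, x ≤ (ρ⁻¹) ^ k * M := by
      intro k
      have := hx (k * μ)
      rw [hkey k] at this
      obtain ⟨y, hy, rfl⟩ := this
      have : y ≤ M := hM hy
      have hnn : (0:ℝ) ≤ (ρ⁻¹)^k := by positivity
      exact mul_le_mul_of_nonneg_left this hnn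
    have htend : Tendsto (fun k : ℕ => (ρ⁻¹) ^ k * M) atTop (nhds 0) := by
      have h1 : Tendsto (fun k : ℕ => (ρ⁻¹) ^ k) atTop (nhds 0) := by
        apply tendsto_pow_atTop_nhds_zero_of_lt_one (by positivity)
        rw [inv_lt_one_iff₀]; right; exact hρ
      simpa using h1.mul_const M
    have : x ≤ 0 := ge_of_tendsto' htend hub
    exact le_antisymm this hx0
  have hInter : (⋂ n : ℕ, iterDeriv K n) = {0} := by
    obtain ⟨x, hx⟩ := hInterNe
    have := hsub hx
    simp only [Set.mem_singleton_iff] at this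
    subst this
    exact subset_antisymm hsub (by simpa using hx)
  refine ⟨hInter, ?_⟩
  -- 0 ∈ K
  have h0K : (0:ℝ) ∈ K := by
    have : (0:ℝ) ∈ ⋂ n : ℕ, iterDeriv K n := by rw [hInter]; rfl
    exact hsubK 0 (by simpa using Set.mem_iInter.mp this 0)
  obtain ⟨α, hα, hα0⟩ := E.surj 0 h0K
  rcases hα.lt_or_eq with hlt | rfl
  · exfalso
    have : E.e wOmega < E.e α := (E.anti hα le_rfl).mp hlt
    rw [hα0] at this
    exact absurd (hK0 (E.mem wOmega le_rfl)) (not_le.mpr this)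
  · exact hα0
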